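/- arXiv:2502.07484 — 3 statements merged into one kernel-verified Lean document; each statement's English description precedes it below -/
import Mathlib

section
/- If the matrices A_1,...,A_K have a common nontrivial invariant subspace V \subset \mathbb{C}^n (0 \ne V \ne \mathbb{C}^n), then f_{\mathcal{A}} does not blow up at every nonzero non-invertible matrix; more precisely, there exists a sequence of invertible matrices U_m converging to a nonzero non-invertible matrix U_0 along which f_{\mathcal{A}}(U_m) stays bounded. -/
noncomputable section

open Matrix Filter

attribute [local instance] Matrix.frobeniusNormedAddCommGroup

/-- The joint diagonalization functional. -/
def jdFun {n K : ℕ} (A : Fin K → Matrix (Fin n) (Fin n) ℂ)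
    (U : Matrix (Fin n) (Fin n) ℂ) : ℝ :=
  (1 / 2) * ∑ k, ∑ i, ∑ j,
    if i = j then 0 else ‖(U⁻¹ * A k * U) i j‖ ^ 2

/-- If the matrices `A₁, …, A_K` have a common nontrivial invariant subspace, then `f_𝒜`
does not blow up at every nonzero non-invertible matrix: there is a sequence of invertible
matrices converging to a nonzero non-invertible matrix along which `f_𝒜` stays bounded. -/
theorem jdFun_bounded_along_sequence_of_invariant_subspace {n K : ℕ}
    (A : Fin K → Matrix (Fin n) (Fin n) ℂ)
    (V : Submodule ℂ (Fin n → ℂ)) (hV0 : V ≠ ⊥) (hV1 : V ≠ ⊤)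
    (hinv : ∀ k, ∀ x ∈ V, (A k).mulVec x ∈ V) :
    ∃ (U : ℕ → Matrix (Fin n) (Fin n) ℂ) (U₀ : Matrix (Fin n) (Fin n) ℂ) (C : ℝ),
      (∀ m, IsUnit (U m)) ∧ U₀ ≠ 0 ∧ ¬ IsUnit U₀ ∧
      Tendsto U atTop (nhds U₀) ∧ ∀ m, jdFun A (U m) ≤ C := by
  classical
  obtain ⟨W, hcompl⟩ := Submodule.exists_isCompl V
  set d := Module.finrank ℂ V with hd
  set e := Module.finrank ℂ W with he
  have hde : d + e = n := by
    have h := Submodule.finrank_add_eq_of_isCompl hcompl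
    rwa [Module.finrank_fin_fun] at h
  have hd1 : 0 < d := by
    rcases Nat.eq_zero_or_pos d with h | h
    · exact absurd (Submodule.finrank_eq_zero.mp h) hV0
    · exact h
  have he1 : 0 < e := by
    rcases Nat.eq_zero_or_pos e with h | h
    · exfalso
      apply hV1
      have hW : W = ⊥ := Submodule.finrank_eq_zero.mp h
      have := hcompl.codisjoint.eq_top
      rwa [hW, sup_bot_eq] at this
    · exact h
  set bV : Module.Basis (Fin d) ℂ V := Module.finBasis ℂ V with hbV
  set bW : Module.Basis (Fin e) ℂ W := Module.finBasis ℂ W with hbW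
  set equivP := Submodule.prodEquivOfIsCompl V W hcompl with hequivP
  set b0 : Module.Basis (Fin d ⊕ Fin e) ℂ (Fin n → ℂ) := (bV.prod bW).map equivP with hb0
  set eqv : (Fin d ⊕ Fin e) ≃ Fin n := finSumFinEquiv.trans (finCongr hde) with heqv
  set b : Module.Basis (Fin n) ℂ (Fin n → ℂ) := b0.reindex eqv with hb
  set std : Module.Basis (Fin n) ℂ (Fin n → ℂ) := Pi.basisFun ℂ (Fin n) with hstd
  set P := LinearMap.toMatrix b std LinearMap.id with hP
  set Q := LinearMap.toMatrix std b LinearMap.id with hQ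
  have hQP : Q * P = 1 := by
    rw [hQ, hP, ← LinearMap.toMatrix_comp b std b, LinearMap.id_comp,
      LinearMap.toMatrix_id]
  have hPQ : P * Q = 1 := by
    rw [hQ, hP, ← LinearMap.toMatrix_comp std b std, LinearMap.id_comp,
      LinearMap.toMatrix_id]
  have hPunit : IsUnit P := ⟨⟨P, Q, hPQ, hQP⟩, rfl⟩
  have hPinv : P⁻¹ = Q := Matrix.inv_eq_left_inv hQP
  set B : Fin K → Matrix (Fin n) (Fin n) ℂ :=
    fun k => LinearMap.toMatrix b b (Matrix.toLin' (A k)) with hBdef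
  have hB : ∀ k, B k = Q * A k * P := by
    intro k
    have h1 : Matrix.toLin' (A k) =
        (LinearMap.id.comp ((Matrix.toLin' (A k)).comp LinearMap.id)) := by simp
    simp only [hBdef]
    rw [h1, LinearMap.toMatrix_comp b std b, LinearMap.toMatrix_comp b std std]
    have h2 : LinearMap.toMatrix std std (Matrix.toLin' (A k)) = A k := by
      rw [hstd, LinearMap.toMatrix_eq_toMatrix', LinearMap.toMatrix'_toLin']
    rw [h2, ← hQ, ← hP, Matrix.mul_assoc]
  -- the membership and representation facts
  have hrepr0 : ∀ x ∈ V, ∀ i : Fin n, (eqv.symm i).isLeft = false → b.repr x i = 0 := by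
    intro x hx i hi
    rw [hb, Module.Basis.repr_reindex_apply]
    obtain ⟨w, hw⟩ : ∃ w, eqv.symm i = Sum.inr w := by
      cases h : eqv.symm i with
      | inl v => rw [h] at hi; simp at hi
      | inr w => exact ⟨w, rfl⟩
    rw [hw, hb0, Module.Basis.map_repr]
    simp only [LinearEquiv.trans_apply]
    rw [Module.Basis.prod_repr_inr]
    have : (equivP.symm x).2 = 0 :=
      (Submodule.prodEquivOfIsCompl_symm_apply_snd_eq_zero V W hcompl).mpr hx
    rw [this]
    simp
  have hbmem : ∀ j : Fin n, (eqv.symm j).isLeft = true → (b j : Fin n → ℂ) ∈ V := by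
    intro j hj
    obtain ⟨v, hv⟩ : ∃ v, eqv.symm j = Sum.inl v := by
      cases h : eqv.symm j with
      | inl v => exact ⟨v, rfl⟩
      | inr w => rw [h] at hj; simp at hj
    rw [hb, Module.Basis.reindex_apply, hv, hb0, Module.Basis.map_apply]
    have : (bV.prod bW) (Sum.inl v) = (bV v, 0) := by
      ext <;> simp [Module.Basis.prod_apply]
    rw [this, hequivP, Submodule.coe_prodEquivOfIsCompl']
    simp
  have hblock : ∀ k (i j : Fin n), (eqv.symm i).isLeft = false →
      (eqv.symm j).isLeft = true → B k i j = 0 := by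
    intro k i j hi hj
    simp only [hBdef]
    rw [LinearMap.toMatrix_apply]
    have hmem : Matrix.toLin' (A k) (b j) ∈ V := by
      rw [Matrix.toLin'_apply]
      exact hinv k _ (hbmem j hj)
    exact hrepr0 _ hmem i hi
  -- the diagonal scalings
  set δ : ℕ → Fin n → ℂ := fun m i =>
    if (eqv.symm i).isLeft then 1 else ((m : ℂ) + 1)⁻¹ with hδ
  set δ₀ : Fin n → ℂ := fun i => if (eqv.symm i).isLeft then 1 else 0 with hδ₀
  have hδne : ∀ m i, δ m i ≠ 0 := by
    intro m i
    rw [hδ]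
    dsimp only
    split
    · exact one_ne_zero
    · exact inv_ne_zero (Nat.cast_add_one_ne_zero m)
  set U : ℕ → Matrix (Fin n) (Fin n) ℂ := fun m => P * Matrix.diagonal (δ m) with hU
  set U₀ : Matrix (Fin n) (Fin n) ℂ := P * Matrix.diagonal δ₀ with hU₀
  have hDunit : ∀ m, IsUnit (Matrix.diagonal (δ m)) := by
    intro m
    apply (Matrix.isUnit_iff_isUnit_det _).mpr
    rw [Matrix.det_diagonal, isUnit_iff_ne_zero]
    exact Finset.prod_ne_zero_iff.mpr fun i _ => hδne m i
  -- conjugation identity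
  have hconj : ∀ m k, (U m)⁻¹ * A k * U m =
      Matrix.diagonal (fun i => (δ m i)⁻¹) * B k * Matrix.diagonal (δ m) := by
    intro m k
    have hDinv : (Matrix.diagonal (δ m))⁻¹ = Matrix.diagonal (fun i => (δ m i)⁻¹) := by
      apply Matrix.inv_eq_left_inv
      rw [Matrix.diagonal_mul_diagonal]
      have hfi : (fun i => (δ m i)⁻¹ * δ m i) = fun _ => 1 :=
        funext fun i => inv_mul_cancel₀ (hδne m i)
      rw [hfi, Matrix.diagonal_one]
    rw [hU]
    dsimp only
    rw [Matrix.mul_inv_rev, hDinv, hPinv, hB k]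
    simp only [Matrix.mul_assoc]
  -- entrywise bound
  have hent : ∀ m k (i j : Fin n),
      ‖((U m)⁻¹ * A k * U m) i j‖ ≤ ‖B k i j‖ := by
    intro m k i j
    rw [hconj m k, Matrix.mul_diagonal, Matrix.diagonal_mul]
    have hmne : ((m : ℂ) + 1) ≠ 0 := Nat.cast_add_one_ne_zero m
    have habs : ‖((m : ℂ) + 1)⁻¹‖ ≤ 1 := by
      rw [norm_inv]
      apply inv_le_one_of_one_le₀
      have : ((m : ℂ) + 1) = ((m + 1 : ℕ) : ℂ) := by push_cast; ring
      rw [this, Complex.norm_natCast]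
      exact_mod_cast Nat.succ_le_succ (Nat.zero_le m)
    by_cases h1 : (eqv.symm i).isLeft = true <;> by_cases h2 : (eqv.symm j).isLeft = true
    · simp [hδ, h1, h2]
    · have hδi : δ m i = 1 := by simp [hδ, h1]
      have hδj : δ m j = ((m : ℂ) + 1)⁻¹ := by simp [hδ, h2]
      rw [hδi, hδj]
      simp only [inv_one, one_mul, norm_mul]
      calc ‖B k i j‖ * ‖((m : ℂ) + 1)⁻¹‖
          ≤ ‖B k i j‖ * 1 := by
            apply mul_le_mul_of_nonneg_left habs (norm_nonneg _)
        _ = ‖B k i j‖ := mul_one _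
    · have hz : B k i j = 0 := hblock k i j (by simpa using h1) h2
      rw [hz]
      simp
    · have hδi : δ m i = ((m : ℂ) + 1)⁻¹ := by simp [hδ, h1]
      have hδj : δ m j = ((m : ℂ) + 1)⁻¹ := by simp [hδ, h2]
      rw [hδi, hδj]
      rw [show (((m : ℂ) + 1)⁻¹)⁻¹ * B k i j * ((m : ℂ) + 1)⁻¹ = B k i j by
        field_simp]
  set C : ℝ := ∑ k, ∑ i, ∑ j, ‖B k i j‖ ^ 2 with hC
  have hbound : ∀ m, jdFun A (U m) ≤ C := by
    intro m
    rw [jdFun]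
    set S : ℝ := ∑ k, ∑ i, ∑ j,
      if i = j then 0 else ‖((U m)⁻¹ * A k * U m) i j‖ ^ 2 with hS
    have hS0 : 0 ≤ S := by
      apply Finset.sum_nonneg; intro k _
      apply Finset.sum_nonneg; intro i _
      apply Finset.sum_nonneg; intro j _
      split
      · exact le_refl 0
      · positivity
    have hSC : S ≤ C := by
      rw [hS, hC]
      apply Finset.sum_le_sum; intro k _
      apply Finset.sum_le_sum; intro i _
      apply Finset.sum_le_sum; intro j _
      split
      · positivity
      · exact pow_le_pow_left₀ (norm_nonneg _) (hent m k i j) 2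
    calc (1 / 2 : ℝ) * S ≤ 1 * S := by
          apply mul_le_mul_of_nonneg_right (by norm_num) hS0
      _ = S := one_mul _
      _ ≤ C := hSC
  refine ⟨U, U₀, C, fun m => hPunit.mul (hDunit m), ?_, ?_, ?_, hbound⟩
  · -- U₀ ≠ 0
    intro h0
    have hQU : Q * U₀ = Matrix.diagonal δ₀ := by
      rw [hU₀, ← Matrix.mul_assoc, hQP, Matrix.one_mul]
    rw [h0, Matrix.mul_zero] at hQU
    set i₀ := eqv (Sum.inl (⟨0, hd1⟩ : Fin d)) with hi₀
    have h1 : δ₀ i₀ = 1 := by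
      rw [hδ₀]
      simp [hi₀, Equiv.symm_apply_apply]
    have h2 := congrFun (congrFun hQU i₀) i₀
    rw [Matrix.diagonal_apply_eq] at h2
    rw [h1] at h2
    simp at h2
  · -- ¬ IsUnit U₀
    intro hu
    have hdet := (Matrix.isUnit_iff_isUnit_det _).mp hu
    rw [hU₀, Matrix.det_mul, Matrix.det_diagonal] at hdet
    set i₁ := eqv (Sum.inr (⟨0, he1⟩ : Fin e)) with hi₁
    have h1 : δ₀ i₁ = 0 := by
      rw [hδ₀]
      simp [hi₁, Equiv.symm_apply_apply]
    rw [Finset.prod_eq_zero (Finset.mem_univ i₁) h1, mul_zero] at hdet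
    simp at hdet
  · -- Tendsto
    have hcomp : ∀ i j : Fin n, Tendsto (fun m => (U m) i j) atTop (nhds (U₀ i j)) := by
      intro i j
      have hUentry : (fun m => (U m) i j) = fun m => P i j * δ m j := by
        funext m
        rw [hU]
        dsimp only
        rw [Matrix.mul_diagonal]
      have hU0entry : U₀ i j = P i j * δ₀ j := by rw [hU₀, Matrix.mul_diagonal]
      rw [hU0entry, hUentry]
      apply Tendsto.const_mul
      by_cases hc : (eqv.symm j).isLeft = true
      · simp only [hδ, hδ₀, hc, if_true]
        exact tendsto_const_nhds
      · simp only [hδ, hδ₀, hc, if_false, Bool.false_eq_true]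
        have hre : Tendsto (fun m : ℕ => ((m : ℝ) + 1)⁻¹) atTop (nhds 0) := by
          simpa [one_div] using tendsto_one_div_add_atTop_nhds_zero_nat (𝕜 := ℝ)
        have := (Complex.continuous_ofReal.tendsto 0).comp hre
        simp only [Complex.ofReal_zero] at this
        convert this using 2 with m
        push_cast
        simp
    exact tendsto_pi_nhds.mpr fun i => tendsto_pi_nhds.mpr fun j => hcomp i j
end
end

section
/- Suppose the matrices in \mathcal{A} = {A_1,...,A_K} have no common nontrivial invariant subspace. Then for every fixed nonzero non-invertible matrix U_0 \in M_n(\mathbb{C}), f_{\mathcal{A}}(U) \to \infty as invertible U \to U_0. -/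
noncomputable section

open Matrix Filter

attribute [local instance] Matrix.frobeniusNormedAddCommGroup

open Topology

lemma offdiag_sq_le_jdFun {n K : ℕ} (A : Fin K → Matrix (Fin n) (Fin n) ℂ)
    (U : Matrix (Fin n) (Fin n) ℂ) (k : Fin K) (i j : Fin n) (hij : i ≠ j) :
    ‖(U⁻¹ * A k * U) i j‖ ^ 2 ≤ 2 * jdFun A U := by
  have h1 : (if i = j then (0:ℝ) else ‖(U⁻¹ * A k * U) i j‖ ^ 2)
      ≤ ∑ j', if i = j' then (0:ℝ) else ‖(U⁻¹ * A k * U) i j'‖ ^ 2 := by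
    refine Finset.single_le_sum
      (f := fun j' => if i = j' then (0:ℝ) else ‖(U⁻¹ * A k * U) i j'‖ ^ 2)
      (fun j' _ => by split <;> positivity) (Finset.mem_univ j)
  have h2 : (∑ j', if i = j' then (0:ℝ) else ‖(U⁻¹ * A k * U) i j'‖ ^ 2)
      ≤ ∑ i', ∑ j', if i' = j' then (0:ℝ) else ‖(U⁻¹ * A k * U) i' j'‖ ^ 2 := by
    refine Finset.single_le_sum
      (f := fun i' => ∑ j', if i' = j' then (0:ℝ) else ‖(U⁻¹ * A k * U) i' j'‖ ^ 2)
      (fun i' _ => Finset.sum_nonneg fun j' _ => by split <;> positivity)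
      (Finset.mem_univ i)
  have h3 : (∑ i', ∑ j', if i' = j' then (0:ℝ) else ‖(U⁻¹ * A k * U) i' j'‖ ^ 2)
      ≤ ∑ k', ∑ i', ∑ j', if i' = j' then (0:ℝ)
        else ‖(U⁻¹ * A k' * U) i' j'‖ ^ 2 := by
    refine Finset.single_le_sum
      (f := fun k' => ∑ i', ∑ j', if i' = j' then (0:ℝ) else ‖(U⁻¹ * A k' * U) i' j'‖ ^ 2)
      (fun k' _ => Finset.sum_nonneg fun i' _ => Finset.sum_nonneg fun j' _ => by
        split <;> positivity)
      (Finset.mem_univ k)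
  rw [if_neg hij] at h1
  have : ‖(U⁻¹ * A k * U) i j‖ ^ 2
      ≤ ∑ k', ∑ i', ∑ j', if i' = j' then (0:ℝ)
        else ‖(U⁻¹ * A k' * U) i' j'‖ ^ 2 := le_trans h1 (le_trans h2 h3)
  unfold jdFun
  linarith

/-- If the matrices in `𝒜` have no common nontrivial invariant subspace, then for every
fixed nonzero non-invertible `U₀`, `f_𝒜(U) → ∞` as invertible `U → U₀`. -/
theorem jdFun_tendsto_atTop_of_no_invariant_subspace {n K : ℕ}
    (A : Fin K → Matrix (Fin n) (Fin n) ℂ)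
    (hno : ∀ V : Submodule ℂ (Fin n → ℂ),
      (∀ k, ∀ x ∈ V, (A k).mulVec x ∈ V) → V = ⊥ ∨ V = ⊤)
    (U₀ : Matrix (Fin n) (Fin n) ℂ) (hU₀ : U₀ ≠ 0) (hU₀' : ¬ IsUnit U₀) :
    Tendsto (jdFun A)
      (nhdsWithin U₀ {U : Matrix (Fin n) (Fin n) ℂ | IsUnit U}) atTop := by
  by_contra h
  rw [tendsto_atTop] at h
  push_neg at h
  obtain ⟨C, hC⟩ := h
  haveI : FirstCountableTopology (Matrix (Fin n) (Fin n) ℂ) :=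
    inferInstanceAs (FirstCountableTopology (Fin n → Fin n → ℂ))
  obtain ⟨w, hw, hwC⟩ := Filter.exists_seq_forall_of_frequently hC
  rw [tendsto_nhdsWithin_iff] at hw
  obtain ⟨hw1, hw2⟩ := hw
  rw [eventually_atTop] at hw2
  obtain ⟨N, hN⟩ := hw2
  set u : ℕ → Matrix (Fin n) (Fin n) ℂ := fun m => w (m + N) with hu_def
  have hu : Tendsto u atTop (𝓝 U₀) := hw1.comp (tendsto_add_atTop_nat N)
  have hUnit : ∀ m, IsUnit (u m) := fun m => hN _ (Nat.le_add_left N m)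
  have hfC : ∀ m, jdFun A (u m) < C := fun m => hwC _
  -- the conjugated matrices
  set B : ℕ → Fin K → Matrix (Fin n) (Fin n) ℂ :=
    fun m k => (u m)⁻¹ * A k * (u m) with hB_def
  have hAu : ∀ m k, A k * u m = u m * B m k := by
    intro m k
    have hdet : IsUnit (u m).det := (Matrix.isUnit_iff_isUnit_det _).mp (hUnit m)
    rw [hB_def]
    rw [← Matrix.mul_assoc, ← Matrix.mul_assoc, Matrix.mul_nonsing_inv _ hdet,
      Matrix.one_mul]
  set M : ℝ := Real.sqrt (2 * C) with hM_def
  have hM0 : 0 ≤ M := Real.sqrt_nonneg _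
  have hoff : ∀ m k i j, i ≠ j → ‖B m k i j‖ ≤ M := by
    intro m k i j hij
    have h1 := offdiag_sq_le_jdFun A (u m) k i j hij
    have h2 : ‖B m k i j‖ ^ 2 ≤ 2 * C := by
      have := hfC m
      calc ‖B m k i j‖ ^ 2 ≤ 2 * jdFun A (u m) := h1
        _ ≤ 2 * C := by linarith
    have := Real.sqrt_le_sqrt h2
    rwa [Real.sqrt_sq (norm_nonneg _)] at this
  -- column scalings
  set s : ℕ → Fin n → ℝ := fun m j => 1 + ∑ k, ‖B m k j j‖ with hs_def
  have hs1 : ∀ m j, 1 ≤ s m j := by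
    intro m j
    have : (0:ℝ) ≤ ∑ k, ‖B m k j j‖ :=
      Finset.sum_nonneg fun k _ => norm_nonneg _
    simp only [hs_def]; linarith
  have hs0 : ∀ m j, (0:ℝ) < s m j := fun m j => lt_of_lt_of_le one_pos (hs1 m j)
  set c : ℕ → Fin K → Fin n → Fin n → ℂ :=
    fun m k i j => B m k i j / (s m j : ℂ) with hc_def
  set r : ℕ → Fin n → ℝ := fun m j => (s m j)⁻¹ with hr_def
  have hr0 : ∀ m j, 0 < r m j := fun m j => inv_pos.mpr (hs0 m j)
  have hr1 : ∀ m j, r m j ≤ 1 := by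
    intro m j
    simp only [hr_def]
    exact inv_le_one_of_one_le₀ (hs1 m j)
  have habs_c : ∀ m k i j, ‖c m k i j‖ = ‖B m k i j‖ / s m j := by
    intro m k i j
    rw [hc_def]
    simp only [norm_div, Complex.norm_real, Real.norm_eq_abs, abs_of_pos (hs0 m j)]
  have hcb : ∀ m k i j, ‖c m k i j‖ ≤ M + 1 := by
    intro m k i j
    rw [habs_c]
    by_cases hij : i = j
    · subst hij
      have hle : ‖B m k i i‖ ≤ s m i := by
        have h1 : ‖B m k i i‖ ≤ ∑ k', ‖B m k' i i‖ :=
          Finset.single_le_sum (f := fun k' => ‖B m k' i i‖)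
            (fun k' _ => norm_nonneg _) (Finset.mem_univ k)
        simp only [hs_def]; linarith
      have := div_le_one_of_le₀ hle (hs0 m i).le
      linarith
    · have h1 : ‖B m k i j‖ / s m j ≤ ‖B m k i j‖ := by
        apply div_le_self (norm_nonneg _) (hs1 m j)
      have := hoff m k i j hij
      linarith
  have hcoff : ∀ m k i j, i ≠ j → ‖c m k i j‖ ≤ M * r m j := by
    intro m k i j hij
    rw [habs_c, div_eq_mul_inv]
    simp only [hr_def]
    exact mul_le_mul_of_nonneg_right (hoff m k i j hij) (hr0 m j).le
  have hsum : ∀ m j, ∑ k, ‖c m k j j‖ = 1 - r m j := by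
    intro m j
    have : ∑ k, ‖c m k j j‖ = (∑ k, ‖B m k j j‖) / s m j := by
      rw [Finset.sum_div]
      exact Finset.sum_congr rfl fun k _ => habs_c m k j j
    rw [this]
    simp only [hr_def]
    have hsne : s m j ≠ 0 := (hs0 m j).ne'
    have hsum_eq : ∑ k, ‖B m k j j‖ = s m j - 1 := by
      simp only [hs_def]; ring
    rw [hsum_eq]
    field_simp
  -- the key entrywise identity
  have hstar : ∀ m k i j,
      (r m j : ℂ) * (A k * u m) i j = ∑ l, u m i l * c m k l j := by
    intro m k i j
    rw [hAu m k]
    have hsne : (s m j : ℂ) ≠ 0 := by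
      simp only [ne_eq, Complex.ofReal_eq_zero]
      exact (hs0 m j).ne'
    simp only [hc_def, hr_def, Matrix.mul_apply, Complex.ofReal_inv]
    rw [Finset.mul_sum]
    refine Finset.sum_congr rfl fun l _ => ?_
    field_simp
  -- compactness: bundle the bounded data
  set x : ℕ → ((Fin K → Fin n → Fin n → ℂ) × (Fin n → ℝ)) :=
    fun m => (fun k i j => c m k i j, fun j => r m j) with hx_def
  have hxmem : ∀ m, x m ∈ Metric.closedBall (0 : (Fin K → Fin n → Fin n → ℂ) × (Fin n → ℝ)) (M + 1) := by
    intro m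
    rw [mem_closedBall_zero_iff]
    rw [Prod.norm_def]
    apply max_le
    · refine pi_norm_le_iff_of_nonneg (by linarith)|>.mpr fun k => ?_
      refine pi_norm_le_iff_of_nonneg (by linarith)|>.mpr fun i => ?_
      refine pi_norm_le_iff_of_nonneg (by linarith)|>.mpr fun j => ?_
      exact hcb m k i j
    · refine pi_norm_le_iff_of_nonneg (by linarith)|>.mpr fun j => ?_
      rw [Real.norm_eq_abs, abs_of_pos (hr0 m j)]
      have := hr1 m j
      linarith
  obtain ⟨a, -, φ, hφ, hconv⟩ :=
    tendsto_subseq_of_bounded Metric.isBounded_closedBall hxmem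
  set cbar : Fin K → Fin n → Fin n → ℂ := a.1 with hcbar_def
  set rbar : Fin n → ℝ := a.2 with hrbar_def
  have hcconv : ∀ k i j, Tendsto (fun m => c (φ m) k i j) atTop (𝓝 (cbar k i j)) := by
    intro k i j
    have h1 : Tendsto (fun m => (x (φ m)).1) atTop (𝓝 a.1) :=
      (continuous_fst.tendsto a).comp hconv
    exact tendsto_pi_nhds.mp (tendsto_pi_nhds.mp (tendsto_pi_nhds.mp h1 k) i) j
  have hrconv : ∀ j, Tendsto (fun m => r (φ m) j) atTop (𝓝 (rbar j)) := by
    intro j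
    have h1 : Tendsto (fun m => (x (φ m)).2) atTop (𝓝 a.2) :=
      (continuous_snd.tendsto a).comp hconv
    exact tendsto_pi_nhds.mp h1 j
  have huφ : Tendsto (fun m => u (φ m)) atTop (𝓝 U₀) := hu.comp hφ.tendsto_atTop
  have huent : ∀ i j, Tendsto (fun m => u (φ m) i j) atTop (𝓝 (U₀ i j)) := by
    intro i j
    have hcont : Continuous fun U : Matrix (Fin n) (Fin n) ℂ => U i j :=
      continuous_pi_iff.mp (continuous_pi_iff.mp continuous_id i) j
    exact (hcont.tendsto U₀).comp huφ
  -- limit of the key identity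
  have hstarbar : ∀ k i j,
      (rbar j : ℂ) * (A k * U₀) i j = ∑ l, U₀ i l * cbar k l j := by
    intro k i j
    have hL : Tendsto (fun m => (r (φ m) j : ℂ) * (A k * u (φ m)) i j) atTop
        (𝓝 ((rbar j : ℂ) * (A k * U₀) i j)) := by
      apply Tendsto.mul
      · exact (Complex.continuous_ofReal.tendsto _).comp (hrconv j)
      · simp only [Matrix.mul_apply]
        exact tendsto_finset_sum _ fun l _ => tendsto_const_nhds.mul (huent l j)
    have hR : Tendsto (fun m => (r (φ m) j : ℂ) * (A k * u (φ m)) i j) atTop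
        (𝓝 (∑ l, U₀ i l * cbar k l j)) := by
      have : (fun m => (r (φ m) j : ℂ) * (A k * u (φ m)) i j)
          = fun m => ∑ l, u (φ m) i l * c (φ m) k l j := by
        funext m; exact hstar (φ m) k i j
      rw [this]
      exact tendsto_finset_sum _ fun l _ => (huent i l).mul (hcconv k l j)
    exact tendsto_nhds_unique hL hR
  have hrbar0 : ∀ j, 0 ≤ rbar j := fun j =>
    ge_of_tendsto' (hrconv j) fun m => (hr0 (φ m) j).le
  have hsumbar : ∀ j, ∑ k, ‖cbar k j j‖ = 1 - rbar j := by
    intro j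
    have hL : Tendsto (fun m => ∑ k, ‖c (φ m) k j j‖) atTop
        (𝓝 (∑ k, ‖cbar k j j‖)) :=
      tendsto_finset_sum _ fun k _ =>
        (continuous_norm.tendsto _).comp (hcconv k j j)
    have hR : Tendsto (fun m => ∑ k, ‖c (φ m) k j j‖) atTop
        (𝓝 (1 - rbar j)) := by
      have : (fun m => ∑ k, ‖c (φ m) k j j‖)
          = fun m => 1 - r (φ m) j := by
        funext m; exact hsum (φ m) j
      rw [this]
      exact tendsto_const_nhds.sub (hrconv j)
    exact tendsto_nhds_unique hL hR
  have hcbaroff : ∀ k i j, i ≠ j → ‖cbar k i j‖ ≤ M * rbar j := by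
    intro k i j hij
    refine le_of_tendsto_of_tendsto'
      ((continuous_norm.tendsto _).comp (hcconv k i j))
      (tendsto_const_nhds.mul (hrconv j)) fun m => hcoff (φ m) k i j hij
  -- the invariant subspace
  set V : Submodule ℂ (Fin n → ℂ) := Submodule.span ℂ (Set.range U₀ᵀ) with hV_def
  have hcolV : ∀ j, U₀ᵀ j ∈ V := fun j => Submodule.subset_span ⟨j, rfl⟩
  have hgen : ∀ k j, (A k).mulVec (U₀ᵀ j) ∈ V := by
    intro k j
    by_cases hrj : rbar j = 0
    · -- column is zero
      have hex : ∃ k₀, cbar k₀ j j ≠ 0 := by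
        by_contra hall
        push_neg at hall
        have h1 := hsumbar j
        simp only [hall, norm_zero, Finset.sum_const_zero, hrj, sub_zero] at h1
        exact zero_ne_one h1
      obtain ⟨k₀, hk₀⟩ := hex
      have hoffz : ∀ l, l ≠ j → cbar k₀ l j = 0 := by
        intro l hl
        have h1 := hcbaroff k₀ l j hl
        rw [hrj, mul_zero] at h1
        exact norm_eq_zero.mp (le_antisymm h1 (norm_nonneg _))
      have hcol0 : U₀ᵀ j = 0 := by
        funext i
        have h := hstarbar k₀ i j
        rw [hrj] at h
        simp only [Complex.ofReal_zero, zero_mul] at h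
        rw [Finset.sum_eq_single j (fun l _ hl => by rw [hoffz l hl, mul_zero])
          (fun hj => absurd (Finset.mem_univ j) hj)] at h
        have : U₀ i j = 0 := by
          rcases mul_eq_zero.mp h.symm with h' | h'
          · exact h'
          · exact absurd h' hk₀
        simpa [Matrix.transpose_apply] using this
      rw [hcol0, Matrix.mulVec_zero]
      exact V.zero_mem
    · have hrjpos : (0:ℝ) < rbar j := lt_of_le_of_ne (hrbar0 j) (Ne.symm hrj)
      have hrjC : (rbar j : ℂ) ≠ 0 := by
        simp only [ne_eq, Complex.ofReal_eq_zero]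
        exact hrj
      have key : (A k).mulVec (U₀ᵀ j)
          = ((rbar j : ℂ))⁻¹ • ∑ l, cbar k l j • U₀ᵀ l := by
        funext i
        have h := hstarbar k i j
        have hmv : (A k).mulVec (U₀ᵀ j) i = (A k * U₀) i j := by
          simp [Matrix.mulVec, Matrix.mul_apply, dotProduct, Matrix.transpose_apply]
        rw [hmv]
        have h2 : (A k * U₀) i j = (rbar j : ℂ)⁻¹ * ∑ l, U₀ i l * cbar k l j := by
          rw [eq_inv_mul_iff_mul_eq₀ hrjC]
          exact h
        rw [h2]
        simp only [Pi.smul_apply, Finset.sum_apply, smul_eq_mul, Matrix.transpose_apply]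
        congr 1
        exact Finset.sum_congr rfl fun l _ => by ring
      rw [key]
      exact V.smul_mem _ (Submodule.sum_mem _ fun l _ => V.smul_mem _ (hcolV l))
  have hinv : ∀ k, ∀ x' ∈ V, (A k).mulVec x' ∈ V := by
    intro k x' hx'
    induction hx' using Submodule.span_induction with
    | mem y hy => obtain ⟨j, rfl⟩ := hy; exact hgen k j
    | zero => rw [Matrix.mulVec_zero]; exact V.zero_mem
    | add y z _ _ hy hz => rw [Matrix.mulVec_add]; exact V.add_mem hy hz
    | smul t y _ hy => rw [Matrix.mulVec_smul]; exact V.smul_mem t hy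
  rcases hno V hinv with hbot | htop
  · -- V = ⊥ contradicts U₀ ≠ 0
    have hex : ∃ i j, U₀ i j ≠ 0 := by
      by_contra hh
      push_neg at hh
      exact hU₀ (Matrix.ext fun i j => hh i j)
    obtain ⟨i, j, hij⟩ := hex
    have := hcolV j
    rw [hbot, Submodule.mem_bot] at this
    exact hij (by simpa [Matrix.transpose_apply] using congrFun this i)
  · -- V = ⊤ contradicts non-invertibility
    have hdet : U₀.det = 0 := by
      by_contra hd
      exact hU₀' ((Matrix.isUnit_iff_isUnit_det U₀).mpr (isUnit_iff_ne_zero.mpr hd))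
    obtain ⟨v, hv0, hv⟩ := Matrix.exists_mulVec_eq_zero_iff.mpr hdet
    have hrange : LinearMap.range U₀.mulVecLin = ⊤ := by
      rw [Matrix.range_mulVecLin]; exact htop
    have hsurj : Function.Surjective U₀.mulVecLin := LinearMap.range_eq_top.mp hrange
    have hinj : Function.Injective U₀.mulVecLin :=
      LinearMap.injective_iff_surjective.mpr hsurj
    apply hv0
    apply hinj
    rw [map_zero]
    exact hv
end
end

section
/- The Hessian operator H_{\mathcal{A}}|_U(Z) = \sum_k U^{-*}([D_k^*, J\diamond[D_k,U^{-1}Z]] + [(U^{-1}Z)^*, J\diamond D_k]D_k^* + [J\diamond D_k, (U^{-1}ZD_k)^*]) represents the bilinear Hessian: \mathcal{H}_{\mathcal{A}}(Z,W) = \mathrm{Re}\langle H_{\mathcal{A}}|_U(Z), W\rangle_F for all Z, W \in M_n(\mathbb{C}), where \mathcal{H}_{\mathcal{A}}(Z,W) = \sum_k \mathrm{Re}\langle J\diamond[D_k, U^{-1}Z],[D_k,U^{-1}W]\rangle_F + \mathrm{Re}\langle J\diamond D_k, [U^{-1}Z, U^{-1}W D_k] + [U^{-1}W, U^{-1}Z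 D_k]\rangle_F. -/
noncomputable section

open Matrix

/-- The complex Frobenius inner product on `M_n(ℂ)`. -/
def frob {n : ℕ} (X Y : Matrix (Fin n) (Fin n) ℂ) : ℂ :=
  ∑ i, ∑ j, X i j * star (Y i j)

/-- The zero-diagonal all-ones matrix. -/
def Jmat (n : ℕ) : Matrix (Fin n) (Fin n) ℂ :=
  Matrix.of fun i j => if i = j then 0 else 1

/-- Commutator of matrices. -/
def com {n : ℕ} (X Y : Matrix (Fin n) (Fin n) ℂ) : Matrix (Fin n) (Fin n) ℂ :=
  X * Y - Y * X

lemma frob_eq_trace {n : ℕ} (X Y : Matrix (Fin n) (Fin n) ℂ) :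
    frob X Y = (X * Yᴴ).trace := by
  simp [frob, Matrix.trace, Matrix.mul_apply, Matrix.conjTranspose_apply, Matrix.diag]

lemma frob_add_left {n : ℕ} (X Y W : Matrix (Fin n) (Fin n) ℂ) :
    frob (X + Y) W = frob X W + frob Y W := by
  simp [frob_eq_trace, Matrix.add_mul]

lemma frob_add_right {n : ℕ} (X Y W : Matrix (Fin n) (Fin n) ℂ) :
    frob W (X + Y) = frob W X + frob W Y := by
  simp [frob_eq_trace, Matrix.mul_add]

lemma frob_sum_left {n K : ℕ} (f : Fin K → Matrix (Fin n) (Fin n) ℂ)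
    (W : Matrix (Fin n) (Fin n) ℂ) :
    frob (∑ k, f k) W = ∑ k, frob (f k) W := by
  simp [frob_eq_trace, Matrix.sum_mul]

lemma frob_conjTranspose_mul_left {n : ℕ} (A M W : Matrix (Fin n) (Fin n) ℂ) :
    frob (Aᴴ * M) W = frob M (A * W) := by
  rw [frob_eq_trace, frob_eq_trace, Matrix.conjTranspose_mul,
    Matrix.mul_assoc, ← Matrix.mul_assoc M, Matrix.trace_mul_cycle]
  rw [Matrix.mul_assoc]

lemma frob_com_right {n : ℕ} (M D Q : Matrix (Fin n) (Fin n) ℂ) :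
    frob M (com D Q) = frob (com Dᴴ M) Q := by
  simp only [frob_eq_trace, com, Matrix.conjTranspose_sub, Matrix.conjTranspose_mul,
    Matrix.mul_sub, Matrix.sub_mul, Matrix.trace_sub]
  congr 1
  · rw [← Matrix.mul_assoc, Matrix.mul_assoc, Matrix.trace_mul_comm]
    exact (Matrix.trace_mul_cycle _ _ _).symm
  · rw [← Matrix.mul_assoc]

lemma frob_com_mul_right {n : ℕ} (N P Q D : Matrix (Fin n) (Fin n) ℂ) :
    frob N (com P (Q * D)) = frob (com Pᴴ N * Dᴴ) Q := by
  simp only [frob_eq_trace, com, Matrix.conjTranspose_sub, Matrix.conjTranspose_mul,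
    Matrix.mul_sub, Matrix.sub_mul, Matrix.trace_sub]
  congr 1
  · -- trace (N * (Dᴴ * (Qᴴ * Pᴴ))) = trace (Pᴴ * N * Dᴴ * Qᴴ)
    rw [← Matrix.mul_assoc, ← Matrix.mul_assoc, Matrix.trace_mul_comm,
      ← Matrix.mul_assoc, ← Matrix.mul_assoc]
  · -- trace (N * (Pᴴ * (Dᴴ * Qᴴ))) = trace (N * Pᴴ * Dᴴ * Qᴴ)
    rw [← Matrix.mul_assoc, ← Matrix.mul_assoc]

lemma frob_com_right' {n : ℕ} (N Q R : Matrix (Fin n) (Fin n) ℂ) :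
    frob N (com Q R) = frob (com N Rᴴ) Q := by
  simp only [frob_eq_trace, com, Matrix.conjTranspose_sub, Matrix.conjTranspose_mul,
    Matrix.mul_sub, Matrix.sub_mul, Matrix.trace_sub]
  congr 1
  · rw [← Matrix.mul_assoc, Matrix.mul_assoc, Matrix.trace_mul_comm]
  · rw [← Matrix.mul_assoc, Matrix.trace_mul_comm, ← Matrix.mul_assoc]

/-- The Hessian operator `H_𝒜|_U` represents the bilinear Hessian `ℋ_𝒜`:
`ℋ_𝒜(Z, W) = Re ⟨H_𝒜|_U(Z), W⟩_F` for all `Z, W`. -/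
theorem hessian_operator_represents_bilinear {n K : ℕ}
    (A : Fin K → Matrix (Fin n) (Fin n) ℂ)
    (U : Matrix (Fin n) (Fin n) ℂ) (hU : IsUnit U)
    (Z W : Matrix (Fin n) (Fin n) ℂ) :
    (∑ k, ((frob (Matrix.hadamard (Jmat n) (com (U⁻¹ * A k * U) (U⁻¹ * Z)))
              (com (U⁻¹ * A k * U) (U⁻¹ * W))).re +
          (frob (Matrix.hadamard (Jmat n) (U⁻¹ * A k * U))
              (com (U⁻¹ * Z) ((U⁻¹ * W) * (U⁻¹ * A k * U)) +
               com (U⁻¹ * W) ((U⁻¹ * Z) * (U⁻¹ * A k * U)))).re)) =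
    (frob (∑ k, (U⁻¹)ᴴ *
        (com (U⁻¹ * A k * U)ᴴ
            (Matrix.hadamard (Jmat n) (com (U⁻¹ * A k * U) (U⁻¹ * Z))) +
         com (U⁻¹ * Z)ᴴ (Matrix.hadamard (Jmat n) (U⁻¹ * A k * U)) *
            (U⁻¹ * A k * U)ᴴ +
         com (Matrix.hadamard (Jmat n) (U⁻¹ * A k * U))
            ((U⁻¹ * Z * (U⁻¹ * A k * U))ᴴ))) W).re := by
  have key : (∑ k, ((frob (Matrix.hadamard (Jmat n) (com (U⁻¹ * A k * U) (U⁻¹ * Z)))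
              (com (U⁻¹ * A k * U) (U⁻¹ * W))) +
          (frob (Matrix.hadamard (Jmat n) (U⁻¹ * A k * U))
              (com (U⁻¹ * Z) ((U⁻¹ * W) * (U⁻¹ * A k * U)) +
               com (U⁻¹ * W) ((U⁻¹ * Z) * (U⁻¹ * A k * U)))))) =
      (frob (∑ k, (U⁻¹)ᴴ *
        (com (U⁻¹ * A k * U)ᴴ
            (Matrix.hadamard (Jmat n) (com (U⁻¹ * A k * U) (U⁻¹ * Z))) +
         com (U⁻¹ * Z)ᴴ (Matrix.hadamard (Jmat n) (U⁻¹ * A k * U)) *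
            (U⁻¹ * A k * U)ᴴ +
         com (Matrix.hadamard (Jmat n) (U⁻¹ * A k * U))
            ((U⁻¹ * Z * (U⁻¹ * A k * U))ᴴ))) W) := by
    rw [frob_sum_left]
    refine Finset.sum_congr rfl fun k _ => ?_
    rw [frob_conjTranspose_mul_left, frob_add_left, frob_add_left,
      frob_add_right, ← frob_com_right, ← frob_com_mul_right]
    have h3 : frob (com (Matrix.hadamard (Jmat n) (U⁻¹ * A k * U))
        ((U⁻¹ * Z * (U⁻¹ * A k * U))ᴴ)) (U⁻¹ * W) =
        frob (Matrix.hadamard (Jmat n) (U⁻¹ * A k * U))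
        (com (U⁻¹ * W) ((U⁻¹ * Z) * (U⁻¹ * A k * U))) := by
      rw [frob_com_right']
    rw [h3]
    ring
  rw [← key, Complex.re_sum]
  exact Finset.sum_congr rfl fun k _ => (Complex.add_re _ _).symm
end
end
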